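/- For every fixed ω in the open unit disc, the supremum of |f′(ω)|² + |f″(ω)/2| over all holomorphic functions f : 𝔻 → ℂ with f(ω) = 0 and sup_{z∈𝔻}|f(z)| ≤ 1 equals 1 / ((1 − |ω|²)(1 − |ω|)). -/

import Mathlib

open Metric Complex Filter Topology

lemma normSq_key (a z : ℂ) :
    Complex.normSq (1 - (starRingEnd ℂ) a * z) - Complex.normSq (z - a)
      = (1 - Complex.normSq z) * (1 - Complex.normSq a) := by
  simp only [Complex.normSq_apply, Complex.sub_re, Complex.sub_im, Complex.one_re, Complex.one_im,
    Complex.mul_re, Complex.mul_im, Complex.conj_re, Complex.conj_im]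
  ring

lemma normSq_le_one_of (z : ℂ) (hz : ‖z‖ ≤ 1) : Complex.normSq z ≤ 1 := by
  have h0 : 0 ≤ ‖z‖ := norm_nonneg z
  have : Complex.normSq z = ‖z‖ ^ 2 := by rw [Complex.normSq_eq_norm_sq]
  nlinarith

lemma moebius_den_ne (a z : ℂ) (ha : ‖a‖ < 1) (hz : ‖z‖ ≤ 1) :
    1 - (starRingEnd ℂ) a * z ≠ 0 := by
  intro h
  have : ‖(starRingEnd ℂ) a * z‖ < 1 := by
    rw [norm_mul, RCLike.norm_conj]
    calc ‖a‖ * ‖z‖ ≤ ‖a‖ * 1 := by gcongr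
    _ < 1 := by simpa using ha
  rw [sub_eq_zero] at h
  rw [← h] at this
  simp at this

lemma moebius_norm_le (a z : ℂ) (ha : ‖a‖ ≤ 1) (hz : ‖z‖ ≤ 1) :
    ‖z - a‖ ≤ ‖1 - (starRingEnd ℂ) a * z‖ := by
  have h1 : Complex.normSq (z - a) ≤ Complex.normSq (1 - (starRingEnd ℂ) a * z) := by
    have hk := normSq_key a z
    have hz' := normSq_le_one_of z hz
    have ha' := normSq_le_one_of a ha
    nlinarith
  simpa [Complex.norm_def] using Real.sqrt_le_sqrt h1

lemma moebius_le_one (a z : ℂ) (ha : ‖a‖ < 1) (hz : ‖z‖ ≤ 1) :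
    ‖(z - a) / (1 - (starRingEnd ℂ) a * z)‖ ≤ 1 := by
  rw [norm_div, div_le_one]
  · exact moebius_norm_le a z ha.le hz
  · exact norm_pos_iff.2 (moebius_den_ne a z ha hz)


lemma norm_sq_eq_normSq (z : ℂ) : ‖z‖^2 = Complex.normSq z := by
  rw [Complex.normSq_eq_norm_sq]

lemma schur_diff {f : ℂ → ℂ} {ω : ℂ} (hω : ‖ω‖ < 1)
    (hd : DifferentiableOn ℂ f (ball 0 1)) :
    DifferentiableOn ℂ (fun z => dslope f ω z * (1 - (starRingEnd ℂ) ω * z)) (ball 0 1) := by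
  have hωb : ω ∈ ball (0:ℂ) 1 := mem_ball_zero_iff.2 hω
  exact ((differentiableOn_dslope (isOpen_ball.mem_nhds hωb)).2 hd).mul
    (((differentiable_const _).sub ((differentiable_const _).mul differentiable_id)).differentiableOn)

lemma schur_bound {f : ℂ → ℂ} {ω : ℂ} (hω : ‖ω‖ < 1)
    (hd : DifferentiableOn ℂ f (ball 0 1)) (hb : ∀ z ∈ ball (0:ℂ) 1, ‖f z‖ ≤ 1)
    (h0 : f ω = 0) {z : ℂ} (hz : z ∈ ball (0:ℂ) 1) :
    ‖dslope f ω z * (1 - (starRingEnd ℂ) ω * z)‖ ≤ 1 := by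
  set g := fun w => dslope f ω w * (1 - (starRingEnd ℂ) ω * w) with hg
  have hr01 : max ‖z‖ ‖ω‖ < 1 := max_lt (mem_ball_zero_iff.1 hz) hω
  have key : ∀ᶠ r in 𝓝[<] (1:ℝ), ‖g z‖^2 ≤ 1 + (1-r^2)*(1-‖ω‖^2)/(r-‖ω‖)^2 := by
    filter_upwards [Ioo_mem_nhdsLT_of_mem ⟨hr01, le_rfl⟩] with r hr
    have hωr : ‖ω‖ < r := lt_of_le_of_lt (le_max_right _ _) hr.1
    have hrpos : 0 < r := lt_of_le_of_lt (norm_nonneg ω) hωr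
    have hr1 : r < 1 := hr.2
    have hC0 : (0:ℝ) ≤ 1 + (1-r^2)*(1-‖ω‖^2)/(r-‖ω‖)^2 := by
      have h1 : (0:ℝ) ≤ 1 - r^2 := by nlinarith
      have h2 : (0:ℝ) ≤ 1 - ‖ω‖^2 := by nlinarith [norm_nonneg ω]
      have := mul_nonneg h1 h2
      positivity
    have hmax : ‖g z‖ ≤ Real.sqrt (1 + (1-r^2)*(1-‖ω‖^2)/(r-‖ω‖)^2) := by
      apply Complex.norm_le_of_forall_mem_frontier_norm_le isBounded_ball
      · refine DifferentiableOn.diffContOnCl ?_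
        rw [closure_ball (0:ℂ) hrpos.ne']
        exact (schur_diff hω hd).mono ((closedBall_subset_ball hr1).trans subset_rfl)
      · rw [frontier_ball (0:ℂ) hrpos.ne']
        intro w hw
        have hwn : ‖w‖ = r := by simpa using mem_sphere_zero_iff_norm.1 hw
        have hwω : w ≠ ω := by intro h; rw [h] at hwn; exact hωr.ne hwn
        have hwb : w ∈ ball (0:ℂ) 1 := mem_ball_zero_iff.2 (hwn ▸ hr1)
        have hgw : ‖g w‖ = ‖f w‖ * ‖1 - (starRingEnd ℂ) ω * w‖ / ‖w - ω‖ := by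
          simp only [hg, dslope_of_ne f hwω, slope_def_field, h0, sub_zero]
          rw [div_mul_eq_mul_div, norm_div, norm_mul]
        rw [hgw]
        have hfw : ‖f w‖ ≤ 1 := hb w hwb
        have hd1 : (0:ℝ) < r - ‖ω‖ := by linarith
        have hd2 : r - ‖ω‖ ≤ ‖w - ω‖ := by
          have := norm_sub_norm_le w ω
          linarith [hwn ▸ this]
        have hDpos : (0:ℝ) < ‖w - ω‖ := lt_of_lt_of_le hd1 hd2
        have step1 : ‖f w‖ * ‖1 - (starRingEnd ℂ) ω * w‖ / ‖w - ω‖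
            ≤ ‖1 - (starRingEnd ℂ) ω * w‖ / ‖w - ω‖ := by
          gcongr
          exact mul_le_of_le_one_left (norm_nonneg _) hfw
        refine le_trans step1 ?_
        rw [Real.le_sqrt (by positivity) hC0]
        have hnum : ‖1 - (starRingEnd ℂ) ω * w‖^2 = ‖w - ω‖^2 + (1-r^2)*(1-‖ω‖^2) := by
          have hk := normSq_key ω w
          rw [norm_sq_eq_normSq, norm_sq_eq_normSq]
          have hw2 : Complex.normSq w = r^2 := by rw [← norm_sq_eq_normSq, hwn]
          have hω2 : Complex.normSq ω = ‖ω‖^2 := (norm_sq_eq_normSq ω).symm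
          rw [hw2, hω2] at hk
          linarith
        rw [div_pow, hnum]
        rw [div_le_iff₀ (by positivity)]
        have hmono : (1-r^2)*(1-‖ω‖^2)/(r-‖ω‖)^2 * ‖w - ω‖^2 ≥ (1-r^2)*(1-‖ω‖^2) := by
          rw [ge_iff_le, div_mul_eq_mul_div, le_div_iff₀ (by positivity)]
          have h1 : (0:ℝ) ≤ (1-r^2)*(1-‖ω‖^2) := by
            have ha : (0:ℝ) ≤ 1-r^2 := by nlinarith
            have hb2 : (0:ℝ) ≤ 1-‖ω‖^2 := by nlinarith [norm_nonneg ω]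
            exact mul_nonneg ha hb2
          have : (r-‖ω‖)^2 ≤ ‖w - ω‖^2 := by nlinarith
          nlinarith
        nlinarith
      · rw [closure_ball (0:ℂ) hrpos.ne']
        exact mem_closedBall_zero_iff.2 (le_of_lt (lt_of_le_of_lt (le_max_left _ _) hr.1))
    calc ‖g z‖^2 ≤ Real.sqrt (1 + (1-r^2)*(1-‖ω‖^2)/(r-‖ω‖)^2) ^ 2 := by
          gcongr
        _ = _ := Real.sq_sqrt hC0
  have hlim : Tendsto (fun r : ℝ => 1 + (1-r^2)*(1-‖ω‖^2)/(r-‖ω‖)^2) (𝓝[<] (1:ℝ)) (𝓝 1) := by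
    have c1 : ContinuousAt (fun r : ℝ => 1 + (1-r^2)*(1-‖ω‖^2)/(r-‖ω‖)^2) 1 := by
      refine continuousAt_const.add (ContinuousAt.div (by fun_prop) (by fun_prop) ?_)
      simpa using pow_ne_zero 2 (sub_ne_zero.2 hω.ne')
    have h2 : Tendsto (fun r : ℝ => 1 + (1-r^2)*(1-‖ω‖^2)/(r-‖ω‖)^2) (𝓝[<] (1:ℝ))
        (𝓝 (1 + (1-(1:ℝ)^2)*(1-‖ω‖^2)/((1:ℝ)-‖ω‖)^2)) :=
      c1.tendsto.mono_left (nhdsWithin_le_nhds (s := Set.Iio (1:ℝ)))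
    simpa using h2
  have hfinal : ‖g z‖^2 ≤ 1 := ge_of_tendsto hlim key
  nlinarith [norm_nonneg (g z)]


lemma conj_mul_self_norm (ω : ℂ) : 1 - (starRingEnd ℂ) ω * ω = ((1 - ‖ω‖^2 : ℝ) : ℂ) := by
  have : (starRingEnd ℂ) ω * ω = (Complex.normSq ω : ℂ) := by
    rw [mul_comm, Complex.mul_conj]
  rw [this, Complex.normSq_eq_norm_sq]
  push_cast
  ring

lemma norm_one_sub_conj_mul_self (ω : ℂ) (hω : ‖ω‖ < 1) :
    ‖1 - (starRingEnd ℂ) ω * ω‖ = 1 - ‖ω‖^2 := by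
  rw [conj_mul_self_norm, Complex.norm_real,
    Real.norm_of_nonneg (by nlinarith [norm_nonneg ω] : (0:ℝ) ≤ 1 - ‖ω‖^2)]

/-- Schwarz–Pick: derivative bound at an interior point. -/
lemma schwarz_pick {f : ℂ → ℂ} {ω : ℂ} (hω : ‖ω‖ < 1)
    (hd : DifferentiableOn ℂ f (ball 0 1)) (hb : ∀ z ∈ ball (0:ℂ) 1, ‖f z‖ ≤ 1) :
    ‖deriv f ω‖ * (1 - ‖ω‖^2) ≤ 1 - ‖f ω‖^2 := by
  have hωb : ω ∈ ball (0:ℂ) 1 := mem_ball_zero_iff.2 hω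
  have hfω : ‖f ω‖ ≤ 1 := hb ω hωb
  rcases eq_or_lt_of_le hfω with heq | hlt
  · -- max of norm attained in interior: f is constant, deriv = 0
    have hmax : IsMaxOn (norm ∘ f) (ball (0:ℂ) 1) ω := by
      intro x hx
      simp only [Function.comp_apply, Set.mem_setOf_eq]
      rw [heq]
      exact hb x hx
    have hconst := Complex.eqOn_of_isPreconnected_of_isMaxOn_norm
      (convex_ball (0:ℂ) 1).isPreconnected isOpen_ball hd hωb hmax
    have hev : f =ᶠ[𝓝 ω] fun _ => f ω :=
      Filter.eventuallyEq_of_mem (isOpen_ball.mem_nhds hωb) (fun x hx => hconst hx)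
    have : deriv f ω = 0 := by
      rw [hev.deriv_eq]; exact deriv_const _ _
    rw [this, norm_zero, zero_mul]
    have : (1:ℝ) - ‖f ω‖^2 = 0 := by rw [heq]; ring
    linarith
  · -- compose with Möbius of codomain
    set c := f ω with hc
    set F := fun z => (f z - c) / (1 - (starRingEnd ℂ) c * f z) with hF
    have hden : ∀ z ∈ ball (0:ℂ) 1, 1 - (starRingEnd ℂ) c * f z ≠ 0 := fun z hz =>
      moebius_den_ne c (f z) hlt (hb z hz)
    have hFd : DifferentiableOn ℂ F (ball 0 1) :=
      ((hd.sub (differentiableOn_const _)).div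
        ((differentiableOn_const _).sub ((differentiableOn_const _).mul hd)) hden)
    have hFb : ∀ z ∈ ball (0:ℂ) 1, ‖F z‖ ≤ 1 := fun z hz =>
      moebius_le_one c (f z) hlt (hb z hz)
    have hF0 : F ω = 0 := by simp [hF, hc]
    have hkey := schur_bound hω hFd hFb hF0 hωb
    rw [dslope_same] at hkey
    -- compute deriv F ω
    have hfd : HasDerivAt f (deriv f ω) ω :=
      (hd.differentiableAt (isOpen_ball.mem_nhds hωb)).hasDerivAt
    have hFder : HasDerivAt F (deriv f ω / (1 - (starRingEnd ℂ) c * c)) ω := by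
      have h1 : HasDerivAt (fun z => f z - c) (deriv f ω) ω := hfd.sub_const c
      have h2 : HasDerivAt (fun z => 1 - (starRingEnd ℂ) c * f z)
          (-((starRingEnd ℂ) c * deriv f ω)) ω := by
        simpa using (((hfd.const_mul ((starRingEnd ℂ) c))).const_sub 1)
      have hne : 1 - (starRingEnd ℂ) c * f ω ≠ 0 := hden ω hωb
      have := h1.fun_div h2 hne
      refine this.congr_deriv ?_
      rw [← hc] at hne ⊢
      field_simp
      ring
    have hderF : deriv F ω = deriv f ω / (1 - (starRingEnd ℂ) c * c) := hFder.deriv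
    rw [hderF, norm_mul, norm_div, norm_one_sub_conj_mul_self ω hω,
      norm_one_sub_conj_mul_self c hlt] at hkey
    have hc2 : (0:ℝ) < 1 - ‖c‖^2 := by nlinarith [norm_nonneg c]
    rw [div_mul_eq_mul_div, div_le_one hc2] at hkey
    simpa [hc] using hkey


section B
variable (ω : ℂ)

noncomputable def Bl (z : ℂ) : ℂ := (z - ω) / (1 - (starRingEnd ℂ) ω * z)
noncomputable def Bl' (z : ℂ) : ℂ :=
  (1 - (starRingEnd ℂ) ω * ω) / (1 - (starRingEnd ℂ) ω * z)^2

lemma hasDerivAt_Bl {z : ℂ} (hz : 1 - (starRingEnd ℂ) ω * z ≠ 0) :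
    HasDerivAt (Bl ω) (Bl' ω z) z := by
  have h1 : HasDerivAt (fun w : ℂ => w - ω) 1 z := (hasDerivAt_id z).sub_const ω
  have h2 : HasDerivAt (fun w : ℂ => 1 - (starRingEnd ℂ) ω * w) (-((starRingEnd ℂ) ω)) z := by
    simpa using (((hasDerivAt_id z).const_mul ((starRingEnd ℂ) ω)).const_sub 1)
  have := h1.fun_div h2 hz
  refine this.congr_deriv ?_
  unfold Bl'
  field_simp
  ring

lemma hasDerivAt_Bl' {z : ℂ} (hz : 1 - (starRingEnd ℂ) ω * z ≠ 0) :
    HasDerivAt (Bl' ω)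
      ((1 - (starRingEnd ℂ) ω * ω) * (2 * (starRingEnd ℂ) ω / (1 - (starRingEnd ℂ) ω * z)^3)) z := by
  have h2 : HasDerivAt (fun w : ℂ => 1 - (starRingEnd ℂ) ω * w) (-((starRingEnd ℂ) ω)) z := by
    simpa using (((hasDerivAt_id z).const_mul ((starRingEnd ℂ) ω)).const_sub 1)
  have hpow : HasDerivAt (fun w : ℂ => (1 - (starRingEnd ℂ) ω * w)^2)
      (2 * (1 - (starRingEnd ℂ) ω * z) * (-((starRingEnd ℂ) ω))) z := by
    simpa using h2.fun_pow 2
  have hinv := hpow.inv (pow_ne_zero 2 hz)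
  have := hinv.const_mul (1 - (starRingEnd ℂ) ω * ω)
  refine this.congr_deriv ?_
  field_simp

end B




lemma aux_mem (a : ℝ) (h0 : (0:ℝ) ≤ a) (h1 : a < 1) :
    1/((1-a^2)*(1-a)) = ((1-a^2)⁻¹)^2 + 2*a/(1-a^2)^2/2 := by
  have hA : (0:ℝ) < 1-a^2 := by nlinarith
  have hr1 : (1:ℝ)-a ≠ 0 := sub_ne_zero.2 h1.ne'
  field_simp [hA.ne']
  ring

theorem stmt2 (ω : ℂ) (hω : ‖ω‖ < 1) :
    sSup {x : ℝ | ∃ f : ℂ → ℂ, DifferentiableOn ℂ f (ball 0 1) ∧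
        (∀ z ∈ ball (0 : ℂ) 1, ‖f z‖ ≤ 1) ∧ f ω = 0 ∧
        x = ‖deriv f ω‖ ^ 2 + ‖deriv (deriv f) ω‖ / 2} =
      1 / ((1 - ‖ω‖ ^ 2) * (1 - ‖ω‖)) := by
  have hωb : ω ∈ ball (0:ℂ) 1 := mem_ball_zero_iff.2 hω
  have hr0 : (0:ℝ) ≤ ‖ω‖ := norm_nonneg ω
  have hA : (0:ℝ) < 1 - ‖ω‖^2 := by nlinarith
  have hden : ∀ z ∈ ball (0:ℂ) 1, 1 - (starRingEnd ℂ) ω * z ≠ 0 := fun z hz =>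
    moebius_den_ne ω z hω (mem_ball_zero_iff.1 hz).le
  have hs0 : 1 - (starRingEnd ℂ) ω * ω ≠ 0 := hden ω hωb
  have hsn : ‖1 - (starRingEnd ℂ) ω * ω‖ = 1 - ‖ω‖^2 := norm_one_sub_conj_mul_self ω hω
  apply IsGreatest.csSup_eq
  constructor
  · -- membership: the Blaschke factor attains the value
    refine ⟨Bl ω, ?_, ?_, ?_, ?_⟩
    · exact (differentiableOn_id.sub_const ω).div
        ((differentiableOn_const _).sub ((differentiableOn_const _).mul differentiableOn_id)) hden
    · exact fun z hz => moebius_le_one ω z hω (mem_ball_zero_iff.1 hz).le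
    · unfold Bl; simp
    · have hev : deriv (Bl ω) =ᶠ[𝓝 ω] Bl' ω :=
        Filter.eventuallyEq_of_mem (isOpen_ball.mem_nhds hωb)
          (fun z hz => (hasDerivAt_Bl ω (hden z hz)).deriv)
      have hd1 : deriv (Bl ω) ω = (1 - (starRingEnd ℂ) ω * ω)⁻¹ := by
        rw [(hasDerivAt_Bl ω hs0).deriv]
        unfold Bl'
        field_simp
      have hd2 : deriv (deriv (Bl ω)) ω = 2 * (starRingEnd ℂ) ω / (1 - (starRingEnd ℂ) ω * ω)^2 := by
        rw [hev.deriv_eq, (hasDerivAt_Bl' ω hs0).deriv]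
        field_simp
      rw [hd1, hd2, norm_inv, hsn, norm_div, norm_mul, norm_pow, hsn, RCLike.norm_conj]
      have h2 : ‖(2:ℂ)‖ = 2 := by simp
      rw [h2]
      exact aux_mem ‖ω‖ hr0 hω
  · -- upper bound
    rintro x ⟨f, hfd, hfb, hf0, rfl⟩
    set g := fun z => dslope f ω z * (1 - (starRingEnd ℂ) ω * z) with hgdef
    have hgd : DifferentiableOn ℂ g (ball 0 1) := schur_diff hω hfd
    have hgb : ∀ z ∈ ball (0:ℂ) 1, ‖g z‖ ≤ 1 := fun z hz => schur_bound hω hfd hfb hf0 hz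
    have hgat : DifferentiableAt ℂ g ω := hgd.differentiableAt (isOpen_ball.mem_nhds hωb)
    have hganl : AnalyticOnNhd ℂ g (ball 0 1) := hgd.analyticOnNhd isOpen_ball
    have hdgat : DifferentiableAt ℂ (deriv g) ω :=
      ((hganl.deriv) ω hωb).differentiableAt
    have hdgat' : ∀ z ∈ ball (0:ℂ) 1, DifferentiableAt ℂ g z := fun z hz =>
      hgd.differentiableAt (isOpen_ball.mem_nhds hz)
    -- f = g * Bl on the ball
    have hfeq : Set.EqOn f (fun z => g z * Bl ω z) (ball (0:ℂ) 1) := by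
      intro z hz
      have h1 : (z - ω) * dslope f ω z = f z := by
        have := sub_smul_dslope f ω z
        rw [smul_eq_mul] at this
        rw [this, hf0, sub_zero]
      simp only [hgdef, Bl]
      field_simp [hden z hz]
      rw [← h1]
      ring
    have hev1 : ∀ z ∈ ball (0:ℂ) 1, f =ᶠ[𝓝 z] fun w => g w * Bl ω w := fun z hz =>
      Filter.eventuallyEq_of_mem (isOpen_ball.mem_nhds hz) hfeq
    have hBl0 : Bl ω ω = 0 := by unfold Bl; simp
    have hBl'ω : Bl' ω ω = (1 - (starRingEnd ℂ) ω * ω)⁻¹ := by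
      unfold Bl'
      field_simp
    -- first derivative
    have hder : ∀ z ∈ ball (0:ℂ) 1, deriv f z = deriv g z * Bl ω z + g z * Bl' ω z := by
      intro z hz
      rw [(hev1 z hz).deriv_eq]
      exact (((hdgat' z hz).hasDerivAt).mul (hasDerivAt_Bl ω (hden z hz))).deriv
    have hd1 : deriv f ω = g ω * (1 - (starRingEnd ℂ) ω * ω)⁻¹ := by
      rw [hder ω hωb, hBl0, hBl'ω, mul_zero, zero_add]
    -- second derivative
    have hev2 : deriv f =ᶠ[𝓝 ω] fun z => deriv g z * Bl ω z + g z * Bl' ω z :=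
      Filter.eventuallyEq_of_mem (isOpen_ball.mem_nhds hωb) hder
    have hd2 : deriv (deriv f) ω = 2 * (deriv g ω * (1 - (starRingEnd ℂ) ω * ω)⁻¹)
        + g ω * ((1 - (starRingEnd ℂ) ω * ω) * (2 * (starRingEnd ℂ) ω / (1 - (starRingEnd ℂ) ω * ω)^3)) := by
      rw [hev2.deriv_eq]
      have t1 : HasDerivAt (fun z => deriv g z * Bl ω z)
          (deriv (deriv g) ω * Bl ω ω + deriv g ω * Bl' ω ω) ω :=
        (hdgat.hasDerivAt).mul (hasDerivAt_Bl ω hs0)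
      have t2 : HasDerivAt (fun z => g z * Bl' ω z)
          (deriv g ω * Bl' ω ω + g ω * ((1 - (starRingEnd ℂ) ω * ω) * (2 * (starRingEnd ℂ) ω / (1 - (starRingEnd ℂ) ω * ω)^3))) ω :=
        (hgat.hasDerivAt).mul (hasDerivAt_Bl' ω hs0)
      rw [(t1.fun_add t2).deriv]
      rw [hBl0, hBl'ω]
      ring
    -- norms
    set r := ‖ω‖ with hr
    set t := ‖g ω‖ with ht
    set u := ‖deriv g ω‖ with hu
    have ht1 : t ≤ 1 := hgb ω hωb
    have ht0 : 0 ≤ t := norm_nonneg _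
    have hu0 : 0 ≤ u := norm_nonneg _
    have hSP : u * (1 - r^2) ≤ 1 - t^2 := schwarz_pick hω hgd hgb
    have hx1 : ‖deriv f ω‖ = t / (1 - r^2) := by
      rw [hd1, norm_mul (g ω), norm_inv, hsn, div_eq_mul_inv, ← ht]
    have hx2 : ‖deriv (deriv f) ω‖ ≤ 2*u/(1-r^2) + 2*r*t/(1-r^2)^2 := by
      rw [hd2]
      refine le_trans (norm_add_le _ _) ?_
      have h2 : ‖(2:ℂ)‖ = 2 := by simp
      have e1 : ‖2 * (deriv g ω * (1 - (starRingEnd ℂ) ω * ω)⁻¹)‖ = 2*u/(1-r^2) := by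
        rw [norm_mul (2:ℂ), norm_mul (deriv g ω), norm_inv, hsn, h2, div_eq_mul_inv, ← hu, mul_assoc]
      have eX : ‖(1 - (starRingEnd ℂ) ω * ω) * (2 * (starRingEnd ℂ) ω / (1 - (starRingEnd ℂ) ω * ω)^3)‖
          = 2*r/(1-r^2)^2 := by
        rw [norm_mul (1 - (starRingEnd ℂ) ω * ω), norm_div, norm_mul (2:ℂ), norm_pow, hsn,
          RCLike.norm_conj, h2, ← hr]
        field_simp [hA.ne']
      have e2 : ‖g ω * ((1 - (starRingEnd ℂ) ω * ω) * (2 * (starRingEnd ℂ) ω / (1 - (starRingEnd ℂ) ω * ω)^3))‖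
          = t * (2*r/(1-r^2)^2) := by
        rw [norm_mul (g ω), eX, ← ht]
      rw [e1, e2]
      apply le_of_eq
      ring
    have key : t^2 + (u*(1-r^2) + r*t) ≤ 1 + r := by nlinarith
    calc ‖deriv f ω‖ ^ 2 + ‖deriv (deriv f) ω‖ / 2
        ≤ (t/(1-r^2))^2 + (2*u/(1-r^2) + 2*r*t/(1-r^2)^2)/2 := by
          rw [hx1]; gcongr
      _ = (t^2 + (u*(1-r^2) + r*t))/(1-r^2)^2 := by
          field_simp
      _ ≤ (1 + r)/(1-r^2)^2 := by gcongr
      _ = 1 / ((1 - r ^ 2) * (1 - r)) := by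
          have hr1 : (1:ℝ) - r ≠ 0 := sub_ne_zero.2 hω.ne'
          have hr2 : (1:ℝ) + r ≠ 0 := by positivity
          have hfac : 1 - r^2 = (1-r)*(1+r) := by ring
          rw [hfac]
          field_simp
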